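/- Let k ≥ 2 and let f_1,...,f_k ∈ R², identified with complex numbers z_1,...,z_k via (x,y) ↦ x + iy, with f_1 ≠ 0. Then (f_1,...,f_k) is a tight frame for R² if and only if Σ_{j=1}^k z_j² = 0. -/

import Mathlib

lemma re_sq (a : ℂ) : (a.re) ^ 2 = (‖a‖ ^ 2 + (a ^ 2).re) / 2 := by
  have h : ‖a‖ ^ 2 = a.re ^ 2 + a.im ^ 2 := by
    rw [Complex.sq_norm, Complex.normSq_apply]; ring
  rw [h]
  simp [pow_two, Complex.mul_re]

/-- Under the identification `ℝ² ≅ ℂ`, vectors `f₁,…,f_k` (with `f₁ ≠ 0`, `k ≥ 2`)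
given by complex numbers `z₁,…,z_k` form a tight frame for `ℝ²` if and only if
`∑ⱼ zⱼ² = 0`. -/
theorem stmt17 (k : ℕ) (hk : 2 ≤ k) (z : Fin k → ℂ) (hz : z ⟨0, by omega⟩ ≠ 0) :
    (∃ B > (0 : ℝ), ∀ w : ℂ,
      ∑ j, (((starRingEnd ℂ) w * z j).re) ^ 2 = B * ‖w‖ ^ 2) ↔
    ∑ j, (z j) ^ 2 = 0 := by
  set S : ℂ := ∑ j, (z j) ^ 2 with hS
  set T : ℝ := ∑ j, ‖z j‖ ^ 2 with hT
  have key : ∀ w : ℂ, ∑ j, (((starRingEnd ℂ) w * z j).re) ^ 2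
      = (‖w‖ ^ 2 * T + (((starRingEnd ℂ) w) ^ 2 * S).re) / 2 := by
    intro w
    have : ∀ j : Fin k, (((starRingEnd ℂ) w * z j).re) ^ 2
        = (‖w‖ ^ 2 * ‖z j‖ ^ 2 + ((((starRingEnd ℂ) w) ^ 2 * (z j) ^ 2)).re) / 2 := by
      intro j
      rw [re_sq]
      congr 1
      rw [mul_pow, norm_mul, mul_pow]
      simp
    rw [Finset.sum_congr rfl (fun j _ => this j)]
    rw [← Finset.sum_div]
    congr 1
    rw [Finset.sum_add_distrib, ← Finset.mul_sum, ← hT]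
    congr 1
    rw [← Complex.re_sum, ← Finset.mul_sum, ← hS]
  constructor
  · rintro ⟨B, hB, hfr⟩
    have h1 := hfr 1
    have hI := hfr Complex.I
    have h2 := hfr (1 + Complex.I)
    rw [key] at h1 hI h2
    simp [Complex.mul_re, Complex.mul_im] at h1 hI h2
    have hn2 : ‖1 + Complex.I‖ ^ 2 = 2 := by
      rw [Complex.sq_norm]
      simp [Complex.normSq_apply]
      norm_num
    rw [hn2] at h2
    have hre : S.re = 0 := by nlinarith [h1, hI]
    have hiv : ((1 + -Complex.I) ^ 2).im = -2 := by
      simp [pow_two, Complex.mul_im]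
      norm_num
    have him : S.im = 0 := by
      rw [hre, hiv] at h2
      rw [hre] at h1
      nlinarith [h1, h2]
    exact Complex.ext hre him
  · intro h0
    have hTpos : 0 < T := by
      have h0' : 0 < ‖z ⟨0, by omega⟩‖ ^ 2 := pow_pos (norm_pos_iff.mpr hz) 2
      have : ‖z ⟨0, by omega⟩‖ ^ 2 ≤ T :=
        Finset.single_le_sum (f := fun j => ‖z j‖ ^ 2) (fun j _ => by positivity)
          (Finset.mem_univ _)
      linarith
    refine ⟨T / 2, by linarith, fun w => ?_⟩
    rw [key, h0]
    simp
    ring
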